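/- There exists an equivalence-equipped argumentation framework and a subset S of its arguments such that S is simple-admissible but not wide-admissible. Concretely, take A = {1, 2, 3, 4, 5}, att = {(1,2), (2,3), (4,5)}, and ≈ the smallest equivalence relation with 3 ≈ 5; then S = {1, 3} is simple-admissible but not wide-admissible. -/

import Mathlib

namespace EEAF

variable {A : Type*}

/-- Equivalence closure of a set of arguments. -/
def cl (equiv : A → A → Prop) (S : Set A) : Set A := {u | ∃ v ∈ S, equiv u v}

/-- `S` is simple-conflict-free: no attacks among members of `S`. -/
def SimpleCF (att : A → A → Prop) (S : Set A) : Prop := ∀ u ∈ S, ∀ v ∈ S, ¬ att u v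

/-- `S` is wide-conflict-free: its equivalence closure is simple-conflict-free. -/
def WideCF (att equiv : A → A → Prop) (S : Set A) : Prop := SimpleCF att (cl equiv S)

/-- `S` simple-defends `u`. -/
def SimpleDef (att : A → A → Prop) (S : Set A) (u : A) : Prop :=
  ∀ v, att v u → ∃ w ∈ S, att w v

/-- `S` wide-defends `u`: it simple-defends every member of `cl {u}`. -/
def WideDef (att equiv : A → A → Prop) (S : Set A) (u : A) : Prop :=
  ∀ x ∈ cl equiv ({u} : Set A), SimpleDef att S x

/-- `S` is simple-admissible. -/
def SimpleAdm (att : A → A → Prop) (S : Set A) : Prop :=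
  SimpleCF att S ∧ ∀ u ∈ S, SimpleDef att S u

/-- `S` is wide-admissible. -/
def WideAdm (att equiv : A → A → Prop) (S : Set A) : Prop :=
  WideCF att equiv S ∧ ∀ u ∈ S, WideDef att equiv S u

/-- `S` is closed under equivalence. -/
def ClosedEquiv (equiv : A → A → Prop) (S : Set A) : Prop := S = cl equiv S

/-- The five arguments 1,…,5. -/
inductive Arg : Type
  | a1 | a2 | a3 | a4 | a5
deriving DecidableEq

instance instFintypeArg : Fintype Arg :=
  ⟨{Arg.a1, Arg.a2, Arg.a3, Arg.a4, Arg.a5}, fun x => by cases x <;> simp⟩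

/-- The attack relation: 1 attacks 2, 2 attacks 3, 4 attacks 5. -/
def attEx : Arg → Arg → Prop := fun u v =>
  (u = Arg.a1 ∧ v = Arg.a2) ∨ (u = Arg.a2 ∧ v = Arg.a3) ∨ (u = Arg.a4 ∧ v = Arg.a5)

/-- The smallest equivalence relation with 3 ≈ 5. -/
def equivEx : Arg → Arg → Prop := Relation.EqvGen (fun u v => u = Arg.a3 ∧ v = Arg.a5)

/-- There is an equivalence-equipped argumentation framework with a subset that is
simple-admissible but not wide-admissible: here S = {1, 3}. -/
theorem simpleAdm_not_wideAdm_example :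
    Equivalence equivEx ∧
    SimpleAdm attEx ({Arg.a1, Arg.a3} : Set Arg) ∧
    ¬ WideAdm attEx equivEx ({Arg.a1, Arg.a3} : Set Arg) := by
  refine ⟨Relation.EqvGen.is_equivalence _, ⟨?_, ?_⟩, ?_⟩
  · rintro u (rfl|rfl) v (rfl|rfl) (⟨h1,h2⟩|⟨h1,h2⟩|⟨h1,h2⟩) <;> simp_all
  · rintro u hu v (⟨rfl,rfl⟩|⟨rfl,rfl⟩|⟨rfl,rfl⟩)
    · exact absurd hu (by simp)
    · exact ⟨Arg.a1, by simp, Or.inl ⟨rfl, rfl⟩⟩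
    · exact absurd hu (by simp)
  · rintro ⟨-, hdef⟩
    have h3 : Arg.a3 ∈ ({Arg.a1, Arg.a3} : Set Arg) := by simp
    have h5 : Arg.a5 ∈ cl equivEx ({Arg.a3} : Set Arg) :=
      ⟨Arg.a3, by simp, Relation.EqvGen.symm _ _ (Relation.EqvGen.rel _ _ ⟨rfl, rfl⟩)⟩
    obtain ⟨w, hw, hatt⟩ := hdef Arg.a3 h3 Arg.a5 h5 Arg.a4 (Or.inr (Or.inr ⟨rfl, rfl⟩))
    rcases hw with rfl|rfl <;> simp [attEx] at hatt


end EEAF
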